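/- For every natural number n and every complex number x, A_n(x) = ((2i)^{n+1}/(n+1))·( B_{n+1}((x+i)/(2i)) − B_{n+1}(1/2) ). -/

import Mathlib

open Polynomial Finset

/-- The pair of polynomial sequences (Aₙ, Cₙ) from the paper:
A₀ = X, C₀ = 0, and
A_{n+1} = ((n+1)/(n+2))·(X·Aₙ + ∑_{k=0}^{n} λₙᵏ·A_k),
C_{n+1} = ((n+1)/(n+2))·((X²+1)·Xⁿ + ∑_{k=0}^{n} λₙᵏ·C_k),
where λₙᵏ is the coefficient of Xᵏ in Cₙ. -/
noncomputable def AC : ℕ → Polynomial ℂ × Polynomial ℂ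
  | 0 => (Polynomial.X, 0)
  | (n+1) =>
    (((n+1 : ℂ)/(n+2)) • (Polynomial.X * (AC n).1 +
        ∑ k ∈ (Finset.range (n+1)).attach, ((AC n).2.coeff k) • (AC k).1),
     ((n+1 : ℂ)/(n+2)) • ((Polynomial.X^2 + 1) * Polynomial.X^n +
        ∑ k ∈ (Finset.range (n+1)).attach, ((AC n).2.coeff k) • (AC k).2))
  decreasing_by
  all_goals first
    | exact Nat.lt_succ_self n
    | exact Nat.lt_succ_of_lt (Finset.mem_range.mp k.2)
    | exact Finset.mem_range.mp k.2

noncomputable def polyA (n : ℕ) : Polynomial ℂ := (AC n).1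
noncomputable def polyC (n : ℕ) : Polynomial ℂ := (AC n).2


namespace Stmt4Aux

open Complex


noncomputable def dd (P : ℂ[X]) : ℂ[X] :=
  C (2*I)⁻¹ * (P.comp (X + C I) - P.comp (X - C I))

noncomputable def ss (P : ℂ[X]) : ℂ[X] :=
  C (2:ℂ)⁻¹ * (P.comp (X + C I) + P.comp (X - C I))

lemma hCI : (C (2*I)⁻¹ : ℂ[X]) * C I = C (2:ℂ)⁻¹ := by
  rw [← C_mul]
  congr 1
  have : (2*I) ≠ 0 := by simp [I_ne_zero]
  field_simp

lemma hCI2 : (C (2:ℂ)⁻¹ : ℂ[X]) * C I = - C (2*I)⁻¹ := by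
  rw [← C_mul, ← C_neg]
  congr 1
  have h2 : (2*I) ≠ 0 := by simp [I_ne_zero]
  field_simp
  linear_combination I_mul_I

lemma dd_add (P Q : ℂ[X]) : dd (P + Q) = dd P + dd Q := by
  simp only [dd, add_comp]; ring

lemma dd_sub (P Q : ℂ[X]) : dd (P - Q) = dd P - dd Q := by
  simp only [dd, sub_comp]; ring

lemma dd_C (a : ℂ) : dd (C a) = 0 := by simp [dd]

lemma dd_Cmul (a : ℂ) (P : ℂ[X]) : dd (C a * P) = C a * dd P := by
  simp only [dd, mul_comp, C_comp]; ring

lemma dd_X : dd X = 1 := by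
  simp only [dd, X_comp]
  have : (X + C I - (X - C I) : ℂ[X]) = C (2*I) := by
    rw [show (2*I : ℂ) = I + I by ring, C_add]; ring
  rw [this, ← C_mul, inv_mul_cancel₀ (by simp [I_ne_zero] : (2*I:ℂ) ≠ 0), C_1]

lemma ss_add (P Q : ℂ[X]) : ss (P + Q) = ss P + ss Q := by
  simp only [ss, add_comp]; ring

lemma ss_sub (P Q : ℂ[X]) : ss (P - Q) = ss P - ss Q := by
  simp only [ss, sub_comp]; ring

lemma ss_C (a : ℂ) : ss (C a) = C a := by
  simp only [ss, C_comp]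
  rw [← C_add, ← C_mul]
  congr 1
  ring

lemma ss_Cmul (a : ℂ) (P : ℂ[X]) : ss (C a * P) = C a * ss P := by
  simp only [ss, mul_comp, C_comp]; ring

lemma dd_X_mul (P : ℂ[X]) : dd (X * P) = X * dd P + ss P := by
  simp only [dd, ss, mul_comp, X_comp]
  have h := hCI
  linear_combination (P.comp (X + C I) + P.comp (X - C I)) * h

lemma ss_X_mul (P : ℂ[X]) : ss (X * P) = X * ss P - dd P := by
  simp only [dd, ss, mul_comp, X_comp]
  have h := hCI2
  linear_combination (P.comp (X + C I) - P.comp (X - C I)) * h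

lemma dd_sum {α : Type*} (s : Finset α) (f : α → ℂ[X]) :
    dd (∑ k ∈ s, f k) = ∑ k ∈ s, dd (f k) := by
  classical
  induction s using Finset.induction with
  | empty => simp [show dd 0 = 0 by simpa using dd_C 0]
  | insert _ _ h ih => simp [Finset.sum_insert h, dd_add, ih]

lemma ss_sum {α : Type*} (s : Finset α) (f : α → ℂ[X]) :
    ss (∑ k ∈ s, f k) = ∑ k ∈ s, ss (f k) := by
  classical
  induction s using Finset.induction with
  | empty => simpa using ss_C 0
  | insert _ _ h ih => simp [Finset.sum_insert h, ss_add, ih]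

lemma dd_eq_zero {P : ℂ[X]} (h : dd P = 0) : P = C (P.eval 0) := by
  have h2I : ((2*I)⁻¹ : ℂ) ≠ 0 := by simp [I_ne_zero]
  have hcomp : P.comp (X + C I) = P.comp (X - C I) := by
    unfold dd at h
    rcases mul_eq_zero.mp h with h' | h'
    · exact absurd (by simpa using h') h2I
    · exact sub_eq_zero.mp h'
  have hshift : ∀ x : ℂ, P.eval (x + 2*I) = P.eval x := by
    intro x
    have := congrArg (eval (x + I)) hcomp
    simp only [eval_comp, eval_add, eval_sub, eval_X, eval_C] at this
    rw [show x + I + I = x + 2*I by ring] at this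
    rw [this]; ring_nf
  have hroots : ∀ m : ℕ, P.eval (2*I*m) = P.eval 0 := by
    intro m
    induction m with
    | zero => simp
    | succ k ih =>
      have := hshift (2*I*k)
      rw [show (2*I*(k:ℂ) + 2*I) = 2*I*((k:ℂ)+1) by ring] at this
      rw [Nat.cast_succ, this, ih]
  have hQ : P - C (P.eval 0) = 0 := by
    apply Polynomial.eq_zero_of_infinite_isRoot
    refine Set.infinite_of_injective_forall_mem
      (f := fun m : ℕ => 2*I*(m:ℂ)) (fun a b hab => ?_) (fun m => ?_)
    · have := mul_left_cancel₀ (by simp [I_ne_zero] : (2*I:ℂ) ≠ 0) hab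
      exact_mod_cast this
    · simp only [Set.mem_setOf_eq, IsRoot, eval_sub, eval_C, hroots m, sub_self]
  linear_combination hQ

lemma dd_inj {P Q : ℂ[X]} (h : dd P = dd Q) (h0 : P.eval 0 = Q.eval 0) : P = Q := by
  have : dd (P - Q) = 0 := by rw [dd_sub, h, sub_self]
  have := dd_eq_zero this
  rw [eval_sub, h0, sub_self, C_0] at this
  linear_combination this
  

-- from p1 (assumed): dd, ss etc. here as axioms for speed? no, will merge. For now test standalone pieces.

noncomputable def bC (m : ℕ) : ℂ[X] := (Polynomial.bernoulli m).map (algebraMap ℚ ℂ)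

noncomputable def ff (m : ℕ) : ℂ[X] :=
  C ((2*I)^m) * (bC m).comp (C (2*I)⁻¹ * (X + C I))

lemma two_I_ne : (2*I : ℂ) ≠ 0 := by simp [I_ne_zero]

lemma bern_comp_add_one (m : ℕ) :
    (Polynomial.bernoulli m).comp (X + 1) =
      Polynomial.bernoulli m + C (m:ℚ) * X^(m-1) := by
  apply Polynomial.funext
  intro x
  rw [eval_comp]
  simp only [eval_add, eval_X, eval_one, eval_mul, eval_C, eval_pow]
  rw [add_comm x 1, Polynomial.bernoulli_eval_one_add]

lemma bC_comp_add_one (m : ℕ) :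
    (bC m).comp (X + 1) = bC m + C (m:ℂ) * X^(m-1) := by
  have := congrArg (Polynomial.map (algebraMap ℚ ℂ)) (bern_comp_add_one m)
  rw [Polynomial.map_comp] at this
  simpa [bC, Polynomial.map_add, Polynomial.map_mul, Polynomial.map_pow, map_C,
    Polynomial.map_one, Polynomial.map_X] using this

-- coefficient and degree of bernoulli
lemma bern_coeff_self (m : ℕ) : (Polynomial.bernoulli m).coeff m = 1 := by
  rw [Polynomial.bernoulli, finset_sum_coeff]
  rw [Finset.sum_eq_single 0]
  · simp
  · intro i hi hne
    rw [coeff_monomial, if_neg]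
    intro hcon
    have hi' : i ≤ m := Nat.lt_succ_iff.mp (Finset.mem_range.mp hi)
    omega
  · simp

lemma bern_natDegree_le (m : ℕ) : (Polynomial.bernoulli m).natDegree ≤ m := by
  apply Polynomial.natDegree_sum_le_of_forall_le
  intro i hi
  exact (Polynomial.natDegree_monomial_le _).trans (by omega)

lemma bC_natDegree (m : ℕ) : (bC m).natDegree = m := by
  apply le_antisymm
  · exact (Polynomial.natDegree_map_le).trans (bern_natDegree_le m)
  · apply Polynomial.le_natDegree_of_ne_zero
    rw [bC, Polynomial.coeff_map, bern_coeff_self]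
    simp

lemma bC_monic (m : ℕ) : (bC m).Monic := by
  unfold Polynomial.Monic Polynomial.leadingCoeff
  rw [bC_natDegree, bC, Polynomial.coeff_map, bern_coeff_self]
  simp

lemma qlin_natDegree : (C (2*I)⁻¹ * (X + C I) : ℂ[X]).natDegree = 1 := by
  rw [Polynomial.natDegree_C_mul (by simpa using two_I_ne), natDegree_X_add_C]

lemma ff_natDegree (m : ℕ) : (ff m).natDegree = m := by
  rw [ff, Polynomial.natDegree_C_mul (pow_ne_zero m two_I_ne)]
  · rw [natDegree_comp, bC_natDegree, qlin_natDegree, mul_one]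

lemma ff_coeff_top (m : ℕ) : (ff m).coeff m = 1 := by
  rw [ff, coeff_C_mul]
  have hdeg : ((bC m).comp (C (2*I)⁻¹ * (X + C I))).natDegree = m := by
    rw [natDegree_comp, bC_natDegree, qlin_natDegree, mul_one]
  have hlc : ((bC m).comp (C (2*I)⁻¹ * (X + C I))).leadingCoeff = (2*I)⁻¹^m := by
    rw [leadingCoeff_comp (by rw [qlin_natDegree]; norm_num)]
    rw [bC_monic m, one_mul, bC_natDegree]
    rw [Polynomial.leadingCoeff_mul, Polynomial.leadingCoeff_C]
    simp [Polynomial.leadingCoeff_X_add_C]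
  have := hlc
  rw [Polynomial.leadingCoeff, hdeg] at this
  rw [this, ← mul_pow, mul_inv_cancel₀ two_I_ne, one_pow]


lemma ff_comp_plus (m : ℕ) :
    (ff m).comp (X + C I) = C ((2*I)^m) * ((bC m).comp (X + 1)).comp (C (2*I)⁻¹ * X) := by
  rw [ff, mul_comp, C_comp, comp_assoc, comp_assoc]
  congr 2
  simp only [mul_comp, C_comp, add_comp, X_comp, one_comp]
  rw [add_assoc, mul_add, ← C_add, show (I + I : ℂ) = 2*I by ring, ← C_mul,
    inv_mul_cancel₀ two_I_ne, C_1]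

lemma ff_comp_minus (m : ℕ) :
    (ff m).comp (X - C I) = C ((2*I)^m) * (bC m).comp (C (2*I)⁻¹ * X) := by
  rw [ff, mul_comp, C_comp, comp_assoc]
  congr 2
  simp only [mul_comp, C_comp, add_comp, sub_comp, X_comp]
  rw [sub_add_cancel]

lemma dd_ff (k : ℕ) : dd (ff (k+1)) = C ((k:ℂ)+1) * X^k := by
  rw [dd, ff_comp_plus, ff_comp_minus, bC_comp_add_one]
  simp only [Nat.cast_add, Nat.cast_one]
  rw [add_comp, mul_comp, C_comp, pow_comp, X_comp]
  rw [show (k+1-1) = k from rfl]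
  have key : ∀ Q : ℂ[X], C ((2*I)⁻¹) * (C ((2*I)^(k+1)) * (Q + C ((k:ℂ)+1) * (C (2*I)⁻¹ * X)^k)
      - C ((2*I)^(k+1)) * Q)
      = C ((2*I)⁻¹ * (2*I)^(k+1) * (((k:ℂ)+1) * ((2*I)⁻¹)^k)) * X^k := by
    intro Q
    rw [mul_pow (C (2*I)⁻¹) X k, ← C_pow, C_mul, C_mul, C_mul]
    ring
  rw [key]
  congr 1
  rw [show ((2*I:ℂ))^(k+1) = (2*I)^k * (2*I) from pow_succ _ _, inv_pow]
  have h1 : ((2*I:ℂ))^k ≠ 0 := pow_ne_zero _ two_I_ne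
  field_simp


noncomputable def FF (k : ℕ) : ℂ[X] :=
  C (((k:ℂ)+1)⁻¹) * (ff (k+1) - C ((ff (k+1)).eval 0))

noncomputable def GG (k : ℕ) : ℂ[X] := X^(k+1) - ss (FF k)

lemma kcast_ne (k : ℕ) : ((k:ℂ)+1) ≠ 0 := by
  have : ((k:ℂ)+1) = ((k+1:ℕ):ℂ) := by push_cast; ring
  rw [this]
  exact Nat.cast_ne_zero.mpr (Nat.succ_ne_zero k)

lemma dd_FF (k : ℕ) : dd (FF k) = X^k := by
  rw [FF, dd_Cmul, dd_sub, dd_C, sub_zero, dd_ff, ← mul_assoc, ← C_mul,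
    inv_mul_cancel₀ (kcast_ne k), C_1, one_mul]

lemma FF_eval0 (k : ℕ) : (FF k).eval 0 = 0 := by simp [FF]

lemma coeff_comp_X_add_C (P : ℂ[X]) (c : ℂ) (d : ℕ) (h : P.natDegree ≤ d) :
    (P.comp (X + C c)).coeff d = P.coeff d := by
  rw [← taylor_apply, taylor_coeff]
  have hh : Polynomial.hasseDeriv d P = C (P.coeff d) := by
    ext n
    rw [Polynomial.hasseDeriv_coeff, coeff_C]
    rcases Nat.eq_zero_or_pos n with h0 | h0
    · subst h0; simp
    · rw [if_neg (by omega)]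
      rw [coeff_eq_zero_of_natDegree_lt (by omega), mul_zero]
  rw [hh, eval_C]

lemma coeff_comp_X_sub_C (P : ℂ[X]) (c : ℂ) (d : ℕ) (h : P.natDegree ≤ d) :
    (P.comp (X - C c)).coeff d = P.coeff d := by
  rw [sub_eq_add_neg, ← C_neg]
  exact coeff_comp_X_add_C P (-c) d h

lemma natDegree_comp_X_add_C (P : ℂ[X]) (c : ℂ) :
    (P.comp (X + C c)).natDegree = P.natDegree := by
  rw [← taylor_apply, natDegree_taylor]

lemma natDegree_comp_X_sub_C (P : ℂ[X]) (c : ℂ) :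
    (P.comp (X - C c)).natDegree = P.natDegree := by
  rw [sub_eq_add_neg, ← C_neg, natDegree_comp_X_add_C]

lemma ss_coeff_top (P : ℂ[X]) (d : ℕ) (h : P.natDegree ≤ d) :
    (ss P).coeff d = P.coeff d := by
  rw [ss, coeff_C_mul, coeff_add, coeff_comp_X_add_C P I d h, coeff_comp_X_sub_C P I d h]
  ring

lemma ss_natDegree_le (P : ℂ[X]) (d : ℕ) (h : P.natDegree ≤ d) :
    (ss P).natDegree ≤ d := by
  refine le_trans (Polynomial.natDegree_C_mul_le _ _) (le_trans (Polynomial.natDegree_add_le _ _) ?_)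
  rw [natDegree_comp_X_add_C, natDegree_comp_X_sub_C]
  simpa using h

lemma FF_natDegree_le (k : ℕ) : (FF k).natDegree ≤ k + 1 := by
  refine le_trans (Polynomial.natDegree_C_mul_le _ _) (le_trans (Polynomial.natDegree_sub_le _ _) ?_)
  rw [ff_natDegree, natDegree_C]
  simp

lemma FF_coeff_top (k : ℕ) : (FF k).coeff (k+1) = ((k:ℂ)+1)⁻¹ := by
  rw [FF, coeff_C_mul, coeff_sub, ff_coeff_top, coeff_C, if_neg (Nat.succ_ne_zero k)]
  ring

lemma GG_natDegree_le (n : ℕ) : (GG n).natDegree ≤ n + 1 := by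
  refine le_trans (Polynomial.natDegree_sub_le _ _) ?_
  rw [natDegree_X_pow]
  exact max_le le_rfl (ss_natDegree_le _ _ (FF_natDegree_le n))

lemma GG_coeff_top (n : ℕ) : (GG n).coeff (n+1) = 1 - ((n:ℂ)+1)⁻¹ := by
  rw [GG, coeff_sub, coeff_X_pow, if_pos rfl,
    ss_coeff_top _ _ (FF_natDegree_le n), FF_coeff_top]

lemma GG_as_sum (n : ℕ) :
    GG n = ∑ k ∈ range (n+2), C ((GG n).coeff k) * X^k := by
  conv_lhs => rw [Polynomial.as_sum_range' (GG n) (n+2) (lt_of_le_of_lt (GG_natDegree_le n) (by omega))]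
  simp [C_mul_X_pow_eq_monomial]


lemma C2_eq : (C (2:ℂ) : ℂ[X]) = 2 := map_ofNat C 2

lemma claim1 (n : ℕ) :
    ∑ k ∈ range (n+2), C ((GG n).coeff k) * FF k = C 2 * FF (n+1) - X * FF n := by
  apply dd_inj
  · rw [dd_sum]
    simp only [dd_Cmul, dd_FF]
    rw [← GG_as_sum, dd_sub, dd_Cmul, dd_X_mul, dd_FF, dd_FF]
    simp only [GG, C2_eq]
    ring
  · rw [eval_finset_sum]
    simp [FF_eval0]

lemma claim2 (n : ℕ) :
    ∑ k ∈ range (n+2), C ((GG n).coeff k) * GG k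
      = X^(n+2) - X^n - C 2 * ss (FF (n+1)) := by
  have h1 : ∀ k, C ((GG n).coeff k) * GG k
      = X * (C ((GG n).coeff k) * X^k) - ss (C ((GG n).coeff k) * FF k) := by
    intro k
    simp only [GG, ss_Cmul]
    ring
  rw [Finset.sum_congr rfl (fun k _ => h1 k), Finset.sum_sub_distrib, ← Finset.mul_sum,
    ← ss_sum, ← GG_as_sum, claim1, ss_sub, ss_Cmul, ss_X_mul, dd_FF]
  simp only [GG]
  ring

lemma ff_one : ff 1 = X := by
  have hb : Polynomial.bernoulli 1 = X - Polynomial.C (1/2 : ℚ) := by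
    simp [Polynomial.bernoulli, Finset.sum_range_succ, _root_.bernoulli_one]
    rw [Polynomial.monomial_one_one_eq_X, show (C (-1/2 : ℚ) : ℚ[X]) = -C (2⁻¹:ℚ) from by rw [← C_neg]; norm_num,
      ← sub_eq_add_neg]
  have hbC : bC 1 = X - C (1/2 : ℂ) := by
    rw [bC, hb]
    push_cast [Polynomial.map_sub, map_C, Polynomial.map_X]
    norm_num
  rw [ff, hbC, sub_comp, X_comp, C_comp]
  rw [mul_add, ← C_mul, show ((2*I:ℂ)⁻¹ * I) = 1/2 from by field_simp]
  rw [pow_one, mul_sub, mul_add, ← mul_assoc, ← C_mul,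
    mul_inv_cancel₀ two_I_ne, C_1, one_mul, ← C_mul]
  norm_num

lemma FF_zero : FF 0 = X := by
  rw [FF, ff_one]
  norm_num

lemma GG_zero : GG 0 = 0 := by
  rw [GG, FF_zero, ss, X_comp, X_comp, pow_one]
  rw [show (X + C I + (X - C I) : ℂ[X]) = C 2 * X from by rw [C2_eq]; ring]
  rw [← mul_assoc, ← C_mul, inv_mul_cancel₀ two_ne_zero, C_1, one_mul, sub_self]

lemma m2cast_ne (m : ℕ) : ((m:ℂ)+2) ≠ 0 := by
  have : ((m:ℂ)+2) = ((m+2:ℕ):ℂ) := by push_cast; ring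
  rw [this]
  exact Nat.cast_ne_zero.mpr (by omega)




theorem polyAC_eq (n : ℕ) : polyA n = FF n ∧ polyC n = GG n := by
  induction n using Nat.strong_induction_on with
  | _ n ih =>
    match n with
    | 0 =>
      constructor
      · show (AC 0).1 = FF 0
        rw [AC, FF_zero]
      · show (AC 0).2 = GG 0
        rw [AC, GG_zero]
    | (m+1) =>
      have ihm := ih m (Nat.lt_succ_self m)
      have hsumA : ∑ k ∈ (Finset.range (m+1)).attach, ((AC m).2.coeff k) • (AC k.1).1
          = ∑ k ∈ range (m+1), C ((GG m).coeff k) * FF k := by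
        rw [← Finset.sum_attach (range (m+1)) (fun k => C ((GG m).coeff k) * FF k)]
        apply Finset.sum_congr rfl
        intro k _
        have hk' : k.1 < m+1 := Finset.mem_range.mp k.2
        have hA : (AC k.1).1 = FF k.1 := (ih k.1 hk').1
        have hC : (AC m).2 = GG m := ihm.2
        rw [hA, hC, Polynomial.smul_eq_C_mul]
      have hsumC : ∑ k ∈ (Finset.range (m+1)).attach, ((AC m).2.coeff k) • (AC k.1).2
          = ∑ k ∈ range (m+1), C ((GG m).coeff k) * GG k := by
        rw [← Finset.sum_attach (range (m+1)) (fun k => C ((GG m).coeff k) * GG k)]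
        apply Finset.sum_congr rfl
        intro k _
        have hk' : k.1 < m+1 := Finset.mem_range.mp k.2
        have hB : (AC k.1).2 = GG k.1 := (ih k.1 hk').2
        have hC : (AC m).2 = GG m := ihm.2
        rw [hB, hC, Polynomial.smul_eq_C_mul]
      have htopA : ∑ k ∈ range (m+1), C ((GG m).coeff k) * FF k
          = C 2 * FF (m+1) - X * FF m - C (1 - ((m:ℂ)+1)⁻¹) * FF (m+1) := by
        have h := Finset.sum_range_succ (fun k => C ((GG m).coeff k) * FF k) (m+1)
        rw [claim1, GG_coeff_top] at h
        linear_combination -h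
      have htopC : ∑ k ∈ range (m+1), C ((GG m).coeff k) * GG k
          = X^(m+2) - X^m - C 2 * ss (FF (m+1)) - C (1 - ((m:ℂ)+1)⁻¹) * GG (m+1) := by
        have h := Finset.sum_range_succ (fun k => C ((GG m).coeff k) * GG k) (m+1)
        rw [claim2, GG_coeff_top] at h
        linear_combination -h
      have hc : ((m:ℂ)+1)/((m:ℂ)+2) * (2 - (1 - ((m:ℂ)+1)⁻¹)) = 1 := by
        have h1 := kcast_ne m
        have h2 := m2cast_ne m
        field_simp
        ring
      constructor
      · show (AC (m+1)).1 = FF (m+1)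
        rw [AC]
        simp only
        rw [hsumA, show (AC m).1 = FF m from ihm.1, htopA, Polynomial.smul_eq_C_mul]
        have hre : X * FF m + (C 2 * FF (m+1) - X * FF m - C (1 - ((m:ℂ)+1)⁻¹) * FF (m+1))
            = C (2 - (1 - ((m:ℂ)+1)⁻¹)) * FF (m+1) := by
          simp only [map_sub, map_add, map_one, C2_eq]
          ring
        rw [hre, ← mul_assoc, ← C_mul, hc, C_1, one_mul]
      · show (AC (m+1)).2 = GG (m+1)
        rw [AC]
        simp only
        rw [hsumC, htopC, Polynomial.smul_eq_C_mul]
        have hre2 : (X^2+1)*X^m + (X^(m+2) - X^m - C 2 * ss (FF (m+1))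
              - C (1 - ((m:ℂ)+1)⁻¹) * GG (m+1))
            = C (2 - (1 - ((m:ℂ)+1)⁻¹)) * GG (m+1) := by
          simp only [map_sub, map_add, map_one, C2_eq]
          simp only [GG]
          ring
        rw [hre2, ← mul_assoc, ← C_mul, hc, C_1, one_mul]

end Stmt4Aux

theorem stmt4 (n : ℕ) (x : ℂ) :
    (polyA n).eval x =
      ((2 * Complex.I) ^ (n + 1) / (n + 1)) *
        (Polynomial.aeval ((x + Complex.I) / (2 * Complex.I)) (Polynomial.bernoulli (n + 1)) -
          Polynomial.aeval ((1 : ℂ) / 2) (Polynomial.bernoulli (n + 1))) := by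
  rw [(Stmt4Aux.polyAC_eq n).1, Stmt4Aux.FF]
  rw [eval_mul, eval_C, eval_sub, eval_C]
  have hev : ∀ y : ℂ, (Stmt4Aux.ff (n+1)).eval y
      = (2*Complex.I)^(n+1) *
        Polynomial.aeval ((2*Complex.I)⁻¹ * (y + Complex.I)) (Polynomial.bernoulli (n+1)) := by
    intro y
    rw [Stmt4Aux.ff, eval_mul, eval_C, eval_comp]
    simp only [eval_mul, eval_C, eval_add, eval_X]
    rw [Stmt4Aux.bC, Polynomial.eval_map, ← Polynomial.aeval_def]
  rw [hev x, hev 0]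
  have h1 : (2*Complex.I)⁻¹ * (x + Complex.I) = (x + Complex.I)/(2*Complex.I) := by
    ring
  have h2 : (2*Complex.I)⁻¹ * ((0:ℂ) + Complex.I) = (1:ℂ)/2 := by
    rw [zero_add, inv_mul_eq_div, div_eq_div_iff (by simp [Complex.I_ne_zero]) two_ne_zero]
    ring
  rw [h1, h2]
  have h3 := Stmt4Aux.kcast_ne n
  field_simp
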